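/- Let K be a field, r ≥ 1 an integer, χ_1, …, χ_r pairwise distinct nonzero elements of K, z ∈ K nonzero with χ_l·z ≠ 1 for all l, and u ∈ K. Then 1 − (1 − u)·Σ_{l=1}^{r} (1/(1 − 1/(χ_l·z))) · ∏_{a≠l} (χ_l − u·χ_a)/(χ_l − χ_a) = ∏_{l=1}^{r} (u − 1/(χ_l·z))/(1 − 1/(χ_l·z)). -/

import Mathlib

open Finset Polynomial


lemma lagrange_key {K : Type*} [Field K] (r : ℕ) (χ : Fin r → K)
    (hχ : Function.Injective χ) (u w : K) :
    ∏ l : Fin r, (w - u * χ l) = (∏ l : Fin r, (w - χ l)) +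
      ∑ l : Fin r, (∏ a : Fin r, (χ l - u * χ a)) *
        ∏ a ∈ Finset.univ.erase l, ((w - χ a) / (χ l - χ a)) := by
  classical
  set p : K[X] := ∏ l : Fin r, (X - C (u * χ l)) with hp
  set q : K[X] := ∏ l : Fin r, (X - C (χ l)) with hq
  have hpm : p.Monic := monic_prod_of_monic _ _ fun i _ => monic_X_sub_C _
  have hqm : q.Monic := monic_prod_of_monic _ _ fun i _ => monic_X_sub_C _
  have hpd : p.natDegree = r := by
    rw [hp, natDegree_prod _ _ fun i _ => X_sub_C_ne_zero _]
    simp only [natDegree_X_sub_C]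
    simp
  have hqd : q.natDegree = r := by
    rw [hq, natDegree_prod _ _ fun i _ => X_sub_C_ne_zero _]
    simp only [natDegree_X_sub_C]
    simp
  have hdeg : (p - q).degree < ((Finset.univ : Finset (Fin r)).card : ℕ) := by
    rw [Finset.card_univ, Fintype.card_fin]
    rcases eq_or_ne p q with h | h
    · simp [h]
    · have hdd : p.degree = q.degree := by
        rw [degree_eq_natDegree hpm.ne_zero, degree_eq_natDegree hqm.ne_zero, hpd, hqd]
      have := degree_sub_lt hdd hpm.ne_zero (hpm.leadingCoeff.trans hqm.leadingCoeff.symm)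
      rwa [degree_eq_natDegree hpm.ne_zero, hpd] at this
  have hint := Lagrange.eq_interpolate (s := (Finset.univ : Finset (Fin r)))
      (v := χ) hχ.injOn hdeg
  have hres : ∀ l, (p - q).eval (χ l) = ∏ a : Fin r, (χ l - u * χ a) := by
    intro l
    have h0 : q.eval (χ l) = 0 := by
      rw [hq, eval_prod]
      exact Finset.prod_eq_zero (mem_univ l) (by simp)
    simp [hp, eval_prod, h0]
  have hbasis : ∀ l, (Lagrange.basis Finset.univ χ l).eval w
      = ∏ a ∈ Finset.univ.erase l, ((w - χ a) / (χ l - χ a)) := by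
    intro l
    rw [Lagrange.basis, eval_prod]
    exact Finset.prod_congr rfl fun a _ => by
      simp [Lagrange.basisDivisor, div_eq_mul_inv, mul_comm]
  have hev := congrArg (eval w) hint
  rw [Lagrange.interpolate_apply] at hev
  simp only [eval_finset_sum, eval_mul, eval_C, eval_sub, hres, hbasis] at hev
  have hpw : p.eval w = ∏ l : Fin r, (w - u * χ l) := by simp [hp, eval_prod]
  have hqw : q.eval w = ∏ l : Fin r, (w - χ l) := by simp [hq, eval_prod]
  rw [hpw, hqw] at hev
  linear_combination hev


/-- For a field `K`, `r ≥ 1`, pairwise distinct nonzero `χ_1, …, χ_r ∈ K`,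
`z ∈ K` nonzero with `χ_l·z ≠ 1` for all `l`, and `u ∈ K`:
`1 − (1−u)·Σ_l (1/(1 − 1/(χ_l z))) ∏_{a≠l} (χ_l − u χ_a)/(χ_l − χ_a)
  = ∏_l (u − 1/(χ_l z))/(1 − 1/(χ_l z))`. -/
theorem one_sub_sum_prod_ratio_eq {K : Type*} [Field K] (r : ℕ) (hr : 1 ≤ r)
    (χ : Fin r → K) (hχ : Function.Injective χ) (hχ0 : ∀ l, χ l ≠ 0)
    (z : K) (hz : z ≠ 0) (hχz : ∀ l, χ l * z ≠ 1) (u : K) :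
    1 - (1 - u) * ∑ l : Fin r, (1 / (1 - 1 / (χ l * z))) *
        ∏ a ∈ Finset.univ.erase l, (χ l - u * χ a) / (χ l - χ a)
      = ∏ l : Fin r, (u - 1 / (χ l * z)) / (1 - 1 / (χ l * z)) := by
  classical
  set w : K := z⁻¹ with hwdef
  have hK0 : ∀ l, χ l * z ≠ 0 := fun l => mul_ne_zero (hχ0 l) hz
  have hwχ : ∀ l, w - χ l ≠ 0 := by
    intro l h
    apply hχz l
    rw [sub_eq_zero] at h
    rw [← h, hwdef, inv_mul_cancel₀ hz]
  have hχw : ∀ l, χ l - w ≠ 0 := fun l h => hwχ l (by rw [sub_eq_zero] at h ⊢; exact h.symm)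
  have hden : ∀ l, (1 : K) - 1 / (χ l * z) ≠ 0 := by
    intro l h
    rw [sub_eq_zero] at h
    exact hχz l ((div_eq_one_iff_eq (hK0 l)).mp h.symm).symm
  have hne : ∀ l a : Fin r, a ≠ l → χ l - χ a ≠ 0 :=
    fun l a h => sub_ne_zero_of_ne (hχ.ne (Ne.symm h))
  -- rewrite the RHS factors
  have hfac : ∀ l : Fin r, (u - 1 / (χ l * z)) / (1 - 1 / (χ l * z))
      = (w - u * χ l) / (w - χ l) := by
    intro l
    rw [div_eq_div_iff (hden l) (hwχ l), hwdef]
    field_simp [hχ0 l, hz]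
    ring
  have hcoef : ∀ l : Fin r, 1 / (1 - 1 / (χ l * z)) = χ l / (χ l - w) := by
    intro l
    rw [div_eq_div_iff (hden l) (hχw l), hwdef]
    field_simp [hχ0 l, hz]
  rw [Finset.prod_congr rfl fun l _ => hfac l, Finset.sum_congr rfl fun l _ => by rw [hcoef l]]
  rw [Finset.prod_div_distrib, lagrange_key r χ hχ u w]
  have hD : (∏ l : Fin r, (w - χ l)) ≠ 0 := Finset.prod_ne_zero_iff.mpr fun l _ => hwχ l
  rw [add_div, div_self hD, Finset.sum_div]
  have hterm : ∀ l : Fin r,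
      ((∏ a : Fin r, (χ l - u * χ a)) * ∏ a ∈ Finset.univ.erase l, ((w - χ a) / (χ l - χ a)))
          / (∏ l : Fin r, (w - χ l))
      = -((1 - u) * ((χ l / (χ l - w)) *
          ∏ a ∈ Finset.univ.erase l, (χ l - u * χ a) / (χ l - χ a))) := by
    intro l
    rw [← Finset.mul_prod_erase Finset.univ (fun a => w - χ a) (Finset.mem_univ l),
        ← Finset.mul_prod_erase Finset.univ (fun a => χ l - u * χ a) (Finset.mem_univ l)]
    have hABC : ((∏ a ∈ Finset.univ.erase l, (χ l - u * χ a)) *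
          ∏ a ∈ Finset.univ.erase l, ((w - χ a) / (χ l - χ a)))
          / (∏ a ∈ Finset.univ.erase l, (w - χ a))
        = ∏ a ∈ Finset.univ.erase l, (χ l - u * χ a) / (χ l - χ a) := by
      rw [← Finset.prod_mul_distrib, ← Finset.prod_div_distrib]
      refine Finset.prod_congr rfl fun a ha => ?_
      have hal : a ≠ l := (Finset.mem_erase.mp ha).1
      have h1 : w - χ a ≠ 0 := hwχ a
      have h2 : χ l - χ a ≠ 0 := hne l a hal
      field_simp
    rw [mul_assoc, mul_div_mul_comm, hABC]
    have hsc : (χ l - u * χ l) / (w - χ l) = -((1 - u) * (χ l / (χ l - w))) := by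
      rw [div_eq_iff (hwχ l)]
      field_simp [hχw l]
      ring
    rw [hsc]
    ring
  rw [Finset.sum_congr rfl fun l _ => hterm l, Finset.sum_neg_distrib, Finset.mul_sum]
  ring
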